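/- Suppose α <₂ β in R₂, X ⊆ α is finite, and Y is a nonempty finite subset of [α, β). Then cofinally in α there are copies of Y that maintain ≤₁-connections to β: for every η < α there exist a finite set Ỹ ⊆ α with η < min Ỹ and X < Ỹ and an isomorphism h : X ∪ Y → X ∪ Ỹ (as substructures of R₂) fixing X pointwise and mapping Y onto Ỹ, such that for every y ∈ Y with y <₁ β the corresponding element h(y) satisfies h(y) <₁ α. -/

import Mathlib

open Ordinal

noncomputable section

/-- The least epsilon number: the least fixed point of `ξ ↦ ω ^ ξ`. -/
def eps0 : Ordinal := sInf {ξ : Ordinal | Ordinal.omega0 ^ ξ = ξ}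

namespace R2

/-- Terms of the language `{≤, ≤₁, ≤₂}`: existentially quantified variables,
universally quantified variables, and parameters (ordinal constants). -/
inductive Trm : Type 1 where
  | evar : ℕ → Trm
  | avar : ℕ → Trm
  | cst  : Ordinal → Trm

def Trm.val (v w : ℕ → Ordinal) : Trm → Ordinal
  | .evar n => v n
  | .avar n => w n
  | .cst c  => c

/-- Quantifier-free formulas in the language `{≤, ≤₁, ≤₂}`. -/
inductive QF : Type 1 where
  | le  : Trm → Trm → QF
  | le1 : Trm → Trm → QF
  | le2 : Trm → Trm → QF
  | not : QF → QF
  | and : QF → QF → QF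
  | or  : QF → QF → QF

def QF.eval (r1 r2 : Ordinal → Ordinal → Prop) (v w : ℕ → Ordinal) : QF → Prop
  | .le s t  => s.val v w ≤ t.val v w
  | .le1 s t => r1 (s.val v w) (t.val v w)
  | .le2 s t => r2 (s.val v w) (t.val v w)
  | .not φ   => ¬ φ.eval r1 r2 v w
  | .and φ ψ => φ.eval r1 r2 v w ∧ ψ.eval r1 r2 v w
  | .or φ ψ  => φ.eval r1 r2 v w ∨ ψ.eval r1 r2 v w

def Trm.NoAvar : Trm → Prop
  | .avar _ => False
  | _ => True

def QF.NoAvar : QF → Prop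
  | .le s t  => s.NoAvar ∧ t.NoAvar
  | .le1 s t => s.NoAvar ∧ t.NoAvar
  | .le2 s t => s.NoAvar ∧ t.NoAvar
  | .not φ   => φ.NoAvar
  | .and φ ψ => φ.NoAvar ∧ ψ.NoAvar
  | .or φ ψ  => φ.NoAvar ∧ ψ.NoAvar

def Trm.CstBelow (δ : Ordinal) : Trm → Prop
  | .cst c => c < δ
  | _ => True

def QF.CstBelow (δ : Ordinal) : QF → Prop
  | .le s t  => s.CstBelow δ ∧ t.CstBelow δ
  | .le1 s t => s.CstBelow δ ∧ t.CstBelow δ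
  | .le2 s t => s.CstBelow δ ∧ t.CstBelow δ
  | .not φ   => φ.CstBelow δ
  | .and φ ψ => φ.CstBelow δ ∧ ψ.CstBelow δ
  | .or φ ψ  => φ.CstBelow δ ∧ ψ.CstBelow δ

/-- Satisfaction of a Σ₁-formula (an existential block in front of a
quantifier-free formula without universal variables) in the segment of
ordinals `< δ`, with the indicated interpretations of `≤₁` and `≤₂`. -/
def Sat1 (r1 r2 : Ordinal → Ordinal → Prop) (δ : Ordinal) (φ : QF) : Prop :=
  ∃ v : ℕ → Ordinal, (∀ n, v n < δ) ∧ φ.eval r1 r2 v v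

/-- Satisfaction of a Σ₂-formula (a block of existential quantifiers followed
by a block of universal quantifiers in front of a quantifier-free formula) in
the segment of ordinals `< δ`. -/
def Sat2 (r1 r2 : Ordinal → Ordinal → Prop) (δ : Ordinal) (φ : QF) : Prop :=
  ∃ v : ℕ → Ordinal, (∀ n, v n < δ) ∧
    ∀ w : ℕ → Ordinal, (∀ n, w n < δ) → φ.eval r1 r2 v w

/-- `(α; ≤, ≤₁, ≤₂)` is a Σ₁-elementary substructure of `(β; ≤, ≤₁, ≤₂)`:
Σ₁-sentences with parameters `< α` hold in `α` iff they hold in `β`. -/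
def Sig1Elem (r1 r2 : Ordinal → Ordinal → Prop) (α β : Ordinal) : Prop :=
  ∀ φ : QF, φ.NoAvar → φ.CstBelow α → (Sat1 r1 r2 α φ ↔ Sat1 r1 r2 β φ)

/-- `(α; ≤, ≤₁, ≤₂)` is a Σ₂-elementary substructure of `(β; ≤, ≤₁, ≤₂)`. -/
def Sig2Elem (r1 r2 : Ordinal → Ordinal → Prop) (α β : Ordinal) : Prop :=
  ∀ φ : QF, φ.CstBelow α → (Sat2 r1 r2 α φ ↔ Sat2 r1 r2 β φ)

/-- The simultaneous recursive (in `β`) definition of `α ≤₁ β` (`i = false`)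
and `α ≤₂ β` (`i = true`): `α ≤ᵢ β` iff `α ≤ β` and `(α; ≤, ≤₁, ≤₂)` is a
Σᵢ-elementary substructure of `(β; ≤, ≤₁, ≤₂)`, where the relations `≤₁, ≤₂`
are the restrictions to the segment below `β`, already defined by recursion. -/
noncomputable def leAux : Ordinal → Bool → Ordinal → Prop :=
  WellFounded.fix Ordinal.lt_wf fun β IH i α =>
    α ≤ β ∧
      (match i with
        | false => Sig1Elem
        | true  => Sig2Elem)
        (fun x y => ∃ h : y < β, IH y h false x)
        (fun x y => ∃ h : y < β, IH y h true x) α β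

/-- `α ≤₁ β` in the structure `R₂`. -/
def le1 (α β : Ordinal) : Prop := leAux β false α

/-- `α ≤₂ β` in the structure `R₂`. -/
def le2 (α β : Ordinal) : Prop := leAux β true α

def lt1 (α β : Ordinal) : Prop := le1 α β ∧ α < β

def lt2 (α β : Ordinal) : Prop := le2 α β ∧ α < β

/-- `h` is an isomorphism (w.r.t. `≤, ≤₁, ≤₂`) on the set `A`. -/
def IsoOn (h : Ordinal → Ordinal) (A : Set Ordinal) : Prop :=
  ∀ x ∈ A, ∀ y ∈ A,
    (x ≤ y ↔ h x ≤ h y) ∧ (le1 x y ↔ le1 (h x) (h y)) ∧ (le2 x y ↔ le2 (h x) (h y))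

end R2

namespace R2

theorem leAux_eq (β : Ordinal) (i : Bool) (α : Ordinal) :
    leAux β i α =
      (α ≤ β ∧
        (match i with
          | false => Sig1Elem
          | true  => Sig2Elem)
          (fun x y => ∃ _ : y < β, le1 x y)
          (fun x y => ∃ _ : y < β, le2 x y) α β) := by
  conv_lhs => rw [leAux, WellFounded.fix_eq]
  rfl

theorem le1_def (α β : Ordinal) : le1 α β ↔ α ≤ β ∧
    Sig1Elem (fun x y => ∃ _ : y < β, le1 x y) (fun x y => ∃ _ : y < β, le2 x y) α β := by
  rw [le1, leAux_eq]

theorem le2_def (α β : Ordinal) : le2 α β ↔ α ≤ β ∧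
    Sig2Elem (fun x y => ∃ _ : y < β, le1 x y) (fun x y => ∃ _ : y < β, le2 x y) α β := by
  rw [le2, leAux_eq]

end R2
namespace R2

theorem Trm.val_lt {δ : Ordinal} {v w : ℕ → Ordinal} (hv : ∀ n, v n < δ)
    (hw : ∀ n, w n < δ) : ∀ {t : Trm}, t.CstBelow δ → t.val v w < δ
  | .evar n, _ => hv n
  | .avar n, _ => hw n
  | .cst _, h => h

/-- Relativized evaluation coincides with absolute evaluation when all values are `< β`. -/
theorem eval_rel_iff_abs {β δ : Ordinal} (hδ : δ ≤ β) {v w : ℕ → Ordinal}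
    (hv : ∀ n, v n < δ) (hw : ∀ n, w n < δ) :
    ∀ {φ : QF}, φ.CstBelow δ →
      (φ.eval (fun x y => ∃ _ : y < β, le1 x y) (fun x y => ∃ _ : y < β, le2 x y) v w ↔
        φ.eval le1 le2 v w)
  | .le s t, _ => Iff.rfl
  | .le1 s t, h => by
      simp only [QF.eval]
      exact ⟨fun ⟨_, h⟩ => h, fun h' => ⟨(Trm.val_lt hv hw h.2).trans_le hδ, h'⟩⟩
  | .le2 s t, h => by
      simp only [QF.eval]
      exact ⟨fun ⟨_, h⟩ => h, fun h' => ⟨(Trm.val_lt hv hw h.2).trans_le hδ, h'⟩⟩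
  | .not φ, h => by
      simp only [QF.eval]
      exact not_congr (eval_rel_iff_abs hδ hv hw h)
  | .and φ ψ, h => by
      simp only [QF.eval]
      exact and_congr (eval_rel_iff_abs hδ hv hw h.1) (eval_rel_iff_abs hδ hv hw h.2)
  | .or φ ψ, h => by
      simp only [QF.eval]
      exact or_congr (eval_rel_iff_abs hδ hv hw h.1) (eval_rel_iff_abs hδ hv hw h.2)

end R2
namespace R2

theorem Trm.CstBelow.mono {δ δ' : Ordinal} (h : δ ≤ δ') :
    ∀ {t : Trm}, t.CstBelow δ → t.CstBelow δ'
  | .evar _, _ => trivial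
  | .avar _, _ => trivial
  | .cst _, hc => hc.trans_le h

theorem QF.CstBelow.mono {δ δ' : Ordinal} (h : δ ≤ δ') :
    ∀ {φ : QF}, φ.CstBelow δ → φ.CstBelow δ'
  | .le _ _, hc => ⟨hc.1.mono h, hc.2.mono h⟩
  | .le1 _ _, hc => ⟨hc.1.mono h, hc.2.mono h⟩
  | .le2 _ _, hc => ⟨hc.1.mono h, hc.2.mono h⟩
  | .not φ, hc => QF.CstBelow.mono (φ := φ) h hc
  | .and _ _, hc => ⟨hc.1.mono h, hc.2.mono h⟩
  | .or _ _, hc => ⟨hc.1.mono h, hc.2.mono h⟩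

theorem sat1_rel_iff_abs {β δ : Ordinal} (hδ : δ ≤ β) {φ : QF} (hφ : φ.CstBelow δ) :
    Sat1 (fun x y => ∃ _ : y < β, le1 x y) (fun x y => ∃ _ : y < β, le2 x y) δ φ ↔
      Sat1 le1 le2 δ φ := by
  unfold Sat1
  refine exists_congr fun v => and_congr_right fun hv => ?_
  exact eval_rel_iff_abs hδ hv hv hφ

theorem sat2_rel_iff_abs {β δ : Ordinal} (hδ : δ ≤ β) {φ : QF} (hφ : φ.CstBelow δ) :
    Sat2 (fun x y => ∃ _ : y < β, le1 x y) (fun x y => ∃ _ : y < β, le2 x y) δ φ ↔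
      Sat2 le1 le2 δ φ := by
  unfold Sat2
  refine exists_congr fun v => and_congr_right fun hv => forall_congr' fun w => ?_
  exact imp_congr_right fun hw => eval_rel_iff_abs hδ hv hw hφ

/-- Absolute characterization of `le1`. -/
theorem le1_iff_abs (α β : Ordinal) : le1 α β ↔ α ≤ β ∧
    ∀ φ : QF, φ.NoAvar → φ.CstBelow α → (Sat1 le1 le2 α φ ↔ Sat1 le1 le2 β φ) := by
  rw [le1_def]
  refine and_congr_right fun hαβ => forall_congr' fun φ => ?_
  refine imp_congr_right fun _ => imp_congr_right fun hφ => ?_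
  rw [sat1_rel_iff_abs hαβ hφ, sat1_rel_iff_abs le_rfl (hφ.mono hαβ)]

/-- Absolute characterization of `le2`. -/
theorem le2_iff_abs (α β : Ordinal) : le2 α β ↔ α ≤ β ∧
    ∀ φ : QF, φ.CstBelow α → (Sat2 le1 le2 α φ ↔ Sat2 le1 le2 β φ) := by
  rw [le2_def]
  refine and_congr_right fun hαβ => forall_congr' fun φ => ?_
  refine imp_congr_right fun hφ => ?_
  rw [sat2_rel_iff_abs hαβ hφ, sat2_rel_iff_abs le_rfl (hφ.mono hαβ)]

theorem le1_refl (α : Ordinal) : le1 α α :=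
  (le1_iff_abs α α).2 ⟨le_rfl, fun _ _ _ => Iff.rfl⟩

theorem sat1_mono {δ δ' : Ordinal} (h : δ ≤ δ') {φ : QF} :
    Sat1 le1 le2 δ φ → Sat1 le1 le2 δ' φ :=
  fun ⟨v, hv, he⟩ => ⟨v, fun n => (hv n).trans_le h, he⟩

/-- Interval lemma: if `y ≤₁ β` then `y ≤₁ w` for every `w` with `y ≤ w ≤ β`. -/
theorem le1_of_le1_of_between {y w β : Ordinal} (h : le1 y β) (h1 : y ≤ w) (h2 : w ≤ β) :
    le1 y w := by
  rw [le1_iff_abs] at h ⊢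
  refine ⟨h1, fun φ hna hφ => ⟨sat1_mono h1, fun hs => ?_⟩⟩
  exact (h.2 φ hna hφ).2 (sat1_mono h2 hs)

end R2
namespace R2

theorem Trm.val_noavar {v w w' : ℕ → Ordinal} : ∀ {t : Trm}, t.NoAvar → t.val v w = t.val v w'
  | .evar _, _ => rfl
  | .cst _, _ => rfl

theorem eval_noavar {r1 r2 : Ordinal → Ordinal → Prop} {v w w' : ℕ → Ordinal} :
    ∀ {φ : QF}, φ.NoAvar → (φ.eval r1 r2 v w ↔ φ.eval r1 r2 v w')
  | .le s t, h => by
      simp only [QF.eval]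
      rw [Trm.val_noavar (w := w) (w' := w') h.1, Trm.val_noavar (w := w) (w' := w') h.2]
  | .le1 s t, h => by
      simp only [QF.eval]
      rw [Trm.val_noavar (w := w) (w' := w') h.1, Trm.val_noavar (w := w) (w' := w') h.2]
  | .le2 s t, h => by
      simp only [QF.eval]
      rw [Trm.val_noavar (w := w) (w' := w') h.1, Trm.val_noavar (w := w) (w' := w') h.2]
  | .not φ, h => not_congr (eval_noavar (φ := φ) h)
  | .and φ ψ, h => and_congr (eval_noavar (φ := φ) h.1) (eval_noavar (φ := ψ) h.2)
  | .or φ ψ, h => or_congr (eval_noavar (φ := φ) h.1) (eval_noavar (φ := ψ) h.2)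

theorem sat2_iff_sat1_of_noavar {δ : Ordinal} {φ : QF} (h : φ.NoAvar) :
    Sat2 le1 le2 δ φ ↔ Sat1 le1 le2 δ φ := by
  constructor
  · rintro ⟨v, hv, he⟩
    exact ⟨v, hv, he v hv⟩
  · rintro ⟨v, hv, he⟩
    exact ⟨v, hv, fun w hw => (eval_noavar h).2 he⟩

theorem le1_of_le2 {α β : Ordinal} (h : le2 α β) : le1 α β := by
  rw [le2_iff_abs] at h
  rw [le1_iff_abs]
  refine ⟨h.1, fun φ hna hφ => ?_⟩
  rw [← sat2_iff_sat1_of_noavar hna, ← sat2_iff_sat1_of_noavar hna]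
  exact h.2 φ hφ

theorem lt1_pos {α β : Ordinal} (h : lt1 α β) : 0 < α := by
  rcases eq_zero_or_pos α with rfl | hp
  · exfalso
    obtain ⟨h1, hlt⟩ := h
    rw [le1_iff_abs] at h1
    have := (h1.2 (.le (.evar 0) (.evar 0)) ⟨trivial, trivial⟩ ⟨trivial, trivial⟩).2
      ⟨fun _ => 0, fun _ => hlt, le_rfl⟩
    obtain ⟨v, hv, -⟩ := this
    exact absurd (hv 0) (not_lt_of_ge (zero_le : (0:Ordinal) ≤ v 0))
  · exact hp

theorem lt1_succ_lt {α β : Ordinal} (h : lt1 α β) {γ : Ordinal} (hγ : γ < α) : γ + 1 < α := by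
  rcases lt_or_eq_of_le (Order.add_one_le_iff.2 hγ) with h' | h'
  · exact h'
  · exfalso
    obtain ⟨h1, hlt⟩ := h
    rw [le1_iff_abs] at h1
    have := (h1.2 (.not (.le (.evar 0) (.cst γ))) ⟨trivial, trivial⟩ ⟨trivial, hγ⟩).2
      ⟨fun _ => α, fun _ => hlt, not_le_of_gt (h'.symm ▸ lt_add_one γ : γ < α)⟩
    obtain ⟨v, hv, he⟩ := this
    have : γ < v 0 := lt_of_not_ge he
    have : γ + 1 ≤ v 0 := Order.add_one_le_iff.2 this
    exact absurd (hv 0) (not_lt_of_ge (h' ▸ this))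

end R2
namespace R2

def Trm.EvarBound (N : ℕ) : Trm → Prop
  | .evar n => n < N
  | _ => True

def QF.EvarBound (N : ℕ) : QF → Prop
  | .le s t => s.EvarBound N ∧ t.EvarBound N
  | .le1 s t => s.EvarBound N ∧ t.EvarBound N
  | .le2 s t => s.EvarBound N ∧ t.EvarBound N
  | .not φ => φ.EvarBound N
  | .and φ ψ => φ.EvarBound N ∧ ψ.EvarBound N
  | .or φ ψ => φ.EvarBound N ∧ ψ.EvarBound N

theorem Trm.EvarBound.mono {N M : ℕ} (h : N ≤ M) : ∀ {t : Trm}, t.EvarBound N → t.EvarBound M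
  | .evar _, hb => hb.trans_le h
  | .avar _, _ => trivial
  | .cst _, _ => trivial

theorem QF.EvarBound.mono {N M : ℕ} (h : N ≤ M) : ∀ {φ : QF}, φ.EvarBound N → φ.EvarBound M
  | .le _ _, hb => ⟨hb.1.mono h, hb.2.mono h⟩
  | .le1 _ _, hb => ⟨hb.1.mono h, hb.2.mono h⟩
  | .le2 _ _, hb => ⟨hb.1.mono h, hb.2.mono h⟩
  | .not φ, hb => QF.EvarBound.mono (φ := φ) h hb
  | .and _ _, hb => ⟨hb.1.mono h, hb.2.mono h⟩
  | .or _ _, hb => ⟨hb.1.mono h, hb.2.mono h⟩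

theorem Trm.exists_evarBound : ∀ t : Trm, ∃ N, t.EvarBound N
  | .evar n => ⟨n + 1, Nat.lt_succ_self n⟩
  | .avar _ => ⟨0, trivial⟩
  | .cst _ => ⟨0, trivial⟩

theorem QF.exists_evarBound : ∀ φ : QF, ∃ N, φ.EvarBound N
  | .le s t => by
      obtain ⟨N, hN⟩ := s.exists_evarBound; obtain ⟨M, hM⟩ := t.exists_evarBound
      exact ⟨max N M, hN.mono (Nat.le_max_left _ _), hM.mono (Nat.le_max_right _ _)⟩
  | .le1 s t => by
      obtain ⟨N, hN⟩ := s.exists_evarBound; obtain ⟨M, hM⟩ := t.exists_evarBound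
      exact ⟨max N M, hN.mono (Nat.le_max_left _ _), hM.mono (Nat.le_max_right _ _)⟩
  | .le2 s t => by
      obtain ⟨N, hN⟩ := s.exists_evarBound; obtain ⟨M, hM⟩ := t.exists_evarBound
      exact ⟨max N M, hN.mono (Nat.le_max_left _ _), hM.mono (Nat.le_max_right _ _)⟩
  | .not φ => φ.exists_evarBound
  | .and φ ψ => by
      obtain ⟨N, hN⟩ := φ.exists_evarBound; obtain ⟨M, hM⟩ := ψ.exists_evarBound
      exact ⟨max N M, hN.mono (Nat.le_max_left _ _), hM.mono (Nat.le_max_right _ _)⟩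
  | .or φ ψ => by
      obtain ⟨N, hN⟩ := φ.exists_evarBound; obtain ⟨M, hM⟩ := ψ.exists_evarBound
      exact ⟨max N M, hN.mono (Nat.le_max_left _ _), hM.mono (Nat.le_max_right _ _)⟩

theorem Trm.val_agree {N : ℕ} {v v' w : ℕ → Ordinal} (hvv : ∀ n < N, v n = v' n) :
    ∀ {t : Trm}, t.EvarBound N → t.val v w = t.val v' w
  | .evar n, hb => hvv n hb
  | .avar _, _ => rfl
  | .cst _, _ => rfl

theorem eval_agree {r1 r2 : Ordinal → Ordinal → Prop} {N : ℕ} {v v' w : ℕ → Ordinal}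
    (hvv : ∀ n < N, v n = v' n) :
    ∀ {φ : QF}, φ.EvarBound N → (φ.eval r1 r2 v w ↔ φ.eval r1 r2 v' w)
  | .le s t, hb => by
      simp only [QF.eval]; rw [Trm.val_agree (w := w) hvv hb.1, Trm.val_agree (w := w) hvv hb.2]
  | .le1 s t, hb => by
      simp only [QF.eval]; rw [Trm.val_agree (w := w) hvv hb.1, Trm.val_agree (w := w) hvv hb.2]
  | .le2 s t, hb => by
      simp only [QF.eval]; rw [Trm.val_agree (w := w) hvv hb.1, Trm.val_agree (w := w) hvv hb.2]
  | .not φ, hb => not_congr (eval_agree (φ := φ) hvv hb)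
  | .and φ ψ, hb => and_congr (eval_agree (φ := φ) hvv hb.1) (eval_agree (φ := ψ) hvv hb.2)
  | .or φ ψ, hb => or_congr (eval_agree (φ := φ) hvv hb.1) (eval_agree (φ := ψ) hvv hb.2)

/-- Continuity: if `y <₁ w` for all `w ∈ [y, α)` and `α` is closed under successors
(and positive), then `y ≤₁ α`. -/
theorem le1_of_forall_lt {y α : Ordinal} (hy : y < α)
    (hsucc : ∀ γ < α, γ + 1 < α)
    (H : ∀ w, y ≤ w → w < α → le1 y w) : le1 y α := by
  rw [le1_iff_abs]
  refine ⟨hy.le, fun φ hna hφ => ⟨sat1_mono hy.le, fun hs => ?_⟩⟩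
  obtain ⟨v, hv, he⟩ := hs
  obtain ⟨N, hN⟩ := φ.exists_evarBound
  set γ : Ordinal := max ((Finset.range N).sup fun n => v n + 1) y with hγdef
  have hγα : γ < α := by
    rcases max_cases ((Finset.range N).sup fun n => v n + 1) y with ⟨h1, _⟩ | ⟨h1, _⟩
    · rw [hγdef, h1]
      rcases Nat.eq_zero_or_pos N with rfl | hNpos
      · simpa using (hsucc 0 (lt_of_le_of_lt (zero_le : (0:Ordinal) ≤ y) hy)).trans_le' (by simp)
      · refine Finset.sup_lt_iff (lt_of_le_of_lt (zero_le : (0:Ordinal) ≤ y) hy) |>.2 ?_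
        intro n _
        exact hsucc (v n) (hv n)
    · rw [hγdef, h1]; exact hy
  have hyγ : y ≤ γ := le_max_right _ _
  have hvγ : ∀ n < N, v n < γ := by
    intro n hn
    have h1 : v n + 1 ≤ (Finset.range N).sup fun n => v n + 1 :=
      Finset.le_sup (f := fun n => v n + 1) (Finset.mem_range.2 hn)
    exact lt_of_lt_of_le (lt_add_one (v n)) (h1.trans (le_max_left _ _))
  set v' : ℕ → Ordinal := fun n => if n < N then v n else y
  have hv' : ∀ n, v' n < γ + 1 := by
    intro n
    by_cases hn : n < N
    · simp only [v', if_pos hn]; exact (hvγ n hn).trans (lt_add_one γ)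
    · simp only [v', if_neg hn]; exact lt_of_le_of_lt hyγ (lt_add_one γ)
  have hγ1 : γ + 1 < α := hsucc γ hγα
  have hle1 : le1 y (γ + 1) := H (γ + 1) (hyγ.trans (lt_add_one γ).le) hγ1
  rw [le1_iff_abs] at hle1
  refine (hle1.2 φ hna hφ).2 ⟨v', hv', ?_⟩
  exact (eval_agree (fun n hn => (if_pos hn).symm) hN).1 ((eval_noavar hna).1 he)

end R2
namespace R2

noncomputable def bigAnd (L : List QF) : QF := L.foldr .and (.le (.evar 0) (.evar 0))

theorem bigAnd_eval {r1 r2 : Ordinal → Ordinal → Prop} {v w : ℕ → Ordinal} :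
    ∀ {L : List QF}, (bigAnd L).eval r1 r2 v w ↔ ∀ ψ ∈ L, ψ.eval r1 r2 v w
  | [] => by simp [bigAnd, QF.eval]
  | ψ :: L => by
      simp only [bigAnd, List.foldr_cons, QF.eval, List.mem_cons]
      rw [show (List.foldr QF.and (.le (.evar 0) (.evar 0)) L) = bigAnd L from rfl,
        bigAnd_eval]
      constructor
      · rintro ⟨h1, h2⟩ χ (rfl | hχ)
        · exact h1
        · exact h2 χ hχ
      · intro h
        exact ⟨h ψ (Or.inl rfl), fun χ hχ => h χ (Or.inr hχ)⟩

theorem bigAnd_cstBelow {δ : Ordinal} : ∀ {L : List QF},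
    (∀ ψ ∈ L, ψ.CstBelow δ) → (bigAnd L).CstBelow δ
  | [], _ => ⟨trivial, trivial⟩
  | ψ :: L, h =>
      ⟨h ψ (List.mem_cons_self), bigAnd_cstBelow fun χ hχ => h χ (List.mem_cons_of_mem _ hχ)⟩

open Classical in
noncomputable def lit (P : Prop) (a : QF) : QF := if P then a else .not a

theorem lit_eval {P : Prop} {a : QF} {r1 r2 : Ordinal → Ordinal → Prop} {v w : ℕ → Ordinal} :
    (lit P a).eval r1 r2 v w ↔ (P ↔ a.eval r1 r2 v w) := by
  unfold lit
  split
  · simp [*]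
  · simp only [QF.eval]; tauto

theorem lit_cstBelow {P : Prop} {a : QF} {δ : Ordinal} (h : a.CstBelow δ) :
    (lit P a).CstBelow δ := by
  unfold lit; split
  · exact h
  · exact h

open Classical in
noncomputable def trm (l : List Ordinal) (a : Ordinal) : Trm :=
  if a ∈ l then .evar (l.idxOf a) else .cst a

theorem trm_cstBelow {l : List Ordinal} {α a : Ordinal} (h : a ∉ l → a < α) :
    (trm l a).CstBelow α := by
  unfold trm; split
  · trivial
  · exact h ‹_›

noncomputable def diagram (l A : List Ordinal) : List QF :=
  A.flatMap fun a => A.flatMap fun b =>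
    [lit (a ≤ b) (.le (trm l a) (trm l b)),
     lit (le1 a b) (.le1 (trm l a) (trm l b)),
     lit (le2 a b) (.le2 (trm l a) (trm l b))]

theorem diagram_eval {l A : List Ordinal} {v w : ℕ → Ordinal} :
    (∀ ψ ∈ diagram l A, ψ.eval le1 le2 v w) ↔
      ∀ a ∈ A, ∀ b ∈ A,
        (a ≤ b ↔ (trm l a).val v w ≤ (trm l b).val v w) ∧
        (le1 a b ↔ le1 ((trm l a).val v w) ((trm l b).val v w)) ∧
        (le2 a b ↔ le2 ((trm l a).val v w) ((trm l b).val v w)) := by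
  unfold diagram
  constructor
  · intro H a ha b hb
    refine ⟨?_, ?_, ?_⟩
    · exact lit_eval.1 (H _ (List.mem_flatMap.2 ⟨a, ha, List.mem_flatMap.2
        ⟨b, hb, List.mem_cons_self⟩⟩))
    · exact lit_eval.1 (H _ (List.mem_flatMap.2 ⟨a, ha, List.mem_flatMap.2
        ⟨b, hb, List.mem_cons_of_mem _ (List.mem_cons_self)⟩⟩))
    · exact lit_eval.1 (H _ (List.mem_flatMap.2 ⟨a, ha, List.mem_flatMap.2
        ⟨b, hb, List.mem_cons_of_mem _ (List.mem_cons_of_mem _ (List.mem_cons_self))⟩⟩))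
  · intro H ψ hψ
    obtain ⟨a, ha, hψ⟩ := List.mem_flatMap.1 hψ
    obtain ⟨b, hb, hψ⟩ := List.mem_flatMap.1 hψ
    obtain ⟨h1, h2, h3⟩ := H a ha b hb
    simp only [List.mem_cons, List.not_mem_nil, or_false] at hψ
    rcases hψ with rfl | rfl | rfl
    · exact lit_eval.2 h1
    · exact lit_eval.2 h2
    · exact lit_eval.2 h3

noncomputable def etaClauses (k : ℕ) (η : Ordinal) : List QF :=
  (List.range k).map fun j => .not (.le (.evar j) (.cst η))

theorem etaClauses_eval {k : ℕ} {η : Ordinal} {r1 r2 : Ordinal → Ordinal → Prop}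
    {v w : ℕ → Ordinal} :
    (∀ ψ ∈ etaClauses k η, ψ.eval r1 r2 v w) ↔ ∀ j < k, ¬ (v j ≤ η) := by
  unfold etaClauses
  constructor
  · intro H j hj
    exact H _ (List.mem_map.2 ⟨j, List.mem_range.2 hj, rfl⟩)
  · intro H ψ hψ
    obtain ⟨j, hj, rfl⟩ := List.mem_map.1 hψ
    exact H j (List.mem_range.1 hj)

open Classical in
noncomputable def conClauses (l : List Ordinal) (β : Ordinal) : List QF :=
  (List.range l.length).map fun j =>
    if lt1 (l.getD j 0) β then .or (.not (.le (.evar j) (.avar 0))) (.le1 (.evar j) (.avar 0))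
    else .le (.evar 0) (.evar 0)

theorem conClauses_eval {l : List Ordinal} {β : Ordinal} {r1 r2 : Ordinal → Ordinal → Prop}
    {v w : ℕ → Ordinal} :
    (∀ ψ ∈ conClauses l β, ψ.eval r1 r2 v w) ↔
      ∀ j < l.length, lt1 (l.getD j 0) β → (v j ≤ w 0 → r1 (v j) (w 0)) := by
  unfold conClauses
  constructor
  · intro H j hj hl hle
    have := H _ (List.mem_map.2 ⟨j, List.mem_range.2 hj, rfl⟩)
    rw [if_pos hl] at this
    rcases this with h | h
    · exact absurd hle h
    · exact h
  · intro H ψ hψ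
    obtain ⟨j, hj, rfl⟩ := List.mem_map.1 hψ
    split
    · show ¬ (v j ≤ w 0) ∨ r1 (v j) (w 0)
      by_cases hle : v j ≤ w 0
      · exact Or.inr (H j (List.mem_range.1 hj) ‹_› hle)
      · exact Or.inl hle
    · exact le_rfl

end R2
namespace R2

theorem trm_val_indep (l : List Ordinal) (a : Ordinal) (v w w' : ℕ → Ordinal) :
    (trm l a).val v w = (trm l a).val v w' := by
  unfold trm; split <;> rfl

theorem trm_val_of_mem {l : List Ordinal} {a : Ordinal} (h : a ∈ l) (v w : ℕ → Ordinal) :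
    (trm l a).val v w = v (l.idxOf a) := by
  unfold trm; rw [if_pos h]; rfl

theorem trm_val_of_not_mem {l : List Ordinal} {a : Ordinal} (h : a ∉ l) (v w : ℕ → Ordinal) :
    (trm l a).val v w = a := by
  unfold trm; rw [if_neg h]; rfl

end R2

/-- If `α <₂ β` in `R₂`, then cofinally in `α` there are copies of any finite
`Y ⊆ [α, β)` (over `X ⊆ α`) maintaining `≤₁`-connections to `β`. -/
theorem cofinal_copies_below_alpha_maintaining_le1 (α β : Ordinal) (h2 : R2.lt2 α β)
    (X Y : Finset Ordinal) (hX : ∀ x ∈ X, x < α) (hY : ∀ y ∈ Y, α ≤ y ∧ y < β)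
    (hYne : Y.Nonempty) :
    ∀ η < α, ∃ Ytil : Finset Ordinal,
      (∀ y ∈ Ytil, y < α) ∧ (∀ y ∈ Ytil, η < y) ∧ (∀ x ∈ X, ∀ y ∈ Ytil, x < y) ∧
      ∃ h : Ordinal → Ordinal,
        Set.BijOn h ↑(X ∪ Y) ↑(X ∪ Ytil) ∧ (∀ x ∈ X, h x = x) ∧
        h '' ↑Y = ↑Ytil ∧ R2.IsoOn h ↑(X ∪ Y) ∧
        ∀ y ∈ Y, R2.lt1 y β → R2.lt1 (h y) α := by
  classical
  intro η hη
  obtain ⟨hle2, hαβ⟩ := h2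
  have hlt1 : R2.lt1 α β := ⟨R2.le1_of_le2 hle2, hαβ⟩
  have hpos : 0 < α := R2.lt1_pos hlt1
  have hsucc : ∀ γ < α, γ + 1 < α := fun γ hγ => R2.lt1_succ_lt hlt1 hγ
  set l : List Ordinal := Y.toList with hl
  set A : List Ordinal := (X ∪ Y).toList with hA
  have hmemA : ∀ a : Ordinal, a ∈ A ↔ a ∈ X ∪ Y := fun a => Finset.mem_toList
  have hmeml : ∀ a : Ordinal, a ∈ l ↔ a ∈ Y := fun a => Finset.mem_toList
  have hXnl : ∀ x ∈ X, x ∉ l := fun x hx hxl =>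
    absurd (hY x ((hmeml x).1 hxl)).1 (not_le.2 ((hX x hx).trans_le le_rfl))
  have hAα : ∀ a ∈ A, a ∉ l → a < α := by
    intro a ha hal
    rcases Finset.mem_union.1 ((hmemA a).1 ha) with h | h
    · exact hX a h
    · exact absurd ((hmeml a).2 h) hal
  set k := l.length with hk
  set Φ : R2.QF := R2.bigAnd (R2.diagram l A ++ R2.etaClauses k η ++ R2.conClauses l β) with hΦ
  have hcst : Φ.CstBelow α := by
    rw [hΦ]
    apply R2.bigAnd_cstBelow
    intro ψ hψ
    rcases List.mem_append.1 hψ with hψ | hψ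
    · rcases List.mem_append.1 hψ with hψ | hψ
      · obtain ⟨a, ha, hψ⟩ := List.mem_flatMap.1 hψ
        obtain ⟨b, hb, hψ⟩ := List.mem_flatMap.1 hψ
        have hca : (R2.trm l a).CstBelow α := R2.trm_cstBelow (hAα a ha)
        have hcb : (R2.trm l b).CstBelow α := R2.trm_cstBelow (hAα b hb)
        simp only [List.mem_cons, List.not_mem_nil, or_false] at hψ
        rcases hψ with rfl | rfl | rfl <;> exact R2.lit_cstBelow ⟨hca, hcb⟩
      · obtain ⟨j, _, rfl⟩ := List.mem_map.1 hψ
        show R2.Trm.CstBelow α (.evar j) ∧ η < α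
        exact ⟨trivial, hη⟩
    · obtain ⟨j, _, rfl⟩ := List.mem_map.1 hψ
      split
      · exact ⟨⟨trivial, trivial⟩, ⟨trivial, trivial⟩⟩
      · exact ⟨trivial, trivial⟩
  -- satisfaction in β
  set vβ : ℕ → Ordinal := fun n => l.getD n 0 with hvβdef
  have hvβY : ∀ n < k, vβ n ∈ Y := by
    intro n hn
    rw [hvβdef]
    simp only
    rw [List.getD_eq_getElem l 0 hn]
    exact (hmeml _).1 (List.getElem_mem _)
  have hvβ : ∀ n, vβ n < β := by
    intro n
    by_cases hn : n < k
    · exact (hY _ (hvβY n hn)).2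
    · rw [hvβdef]
      simp only
      rw [List.getD_eq_default l 0 (not_lt.1 hn)]
      exact hpos.trans hαβ
  have hvalβ : ∀ (w : ℕ → Ordinal), ∀ a ∈ A, (R2.trm l a).val vβ w = a := by
    intro w a ha
    by_cases hal : a ∈ l
    · rw [R2.trm_val_of_mem hal]
      have hidx : l.idxOf a < l.length := List.idxOf_lt_length_iff.2 hal
      rw [hvβdef]
      simp only
      rw [List.getD_eq_getElem l 0 hidx]
      exact List.idxOf_get hidx
    · exact R2.trm_val_of_not_mem hal vβ w
  have hsatβ : R2.Sat2 R2.le1 R2.le2 β Φ := by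
    refine ⟨vβ, hvβ, fun w hw => ?_⟩
    rw [hΦ, R2.bigAnd_eval]
    intro ψ hψ
    rcases List.mem_append.1 hψ with hψ | hψ
    · rcases List.mem_append.1 hψ with hψ | hψ
      · refine R2.diagram_eval.2 (fun a ha b hb => ?_) ψ hψ
        rw [hvalβ w a ha, hvalβ w b hb]
        exact ⟨Iff.rfl, Iff.rfl, Iff.rfl⟩
      · refine R2.etaClauses_eval.2 (fun j hj => ?_) ψ hψ
        exact not_le.2 (hη.trans_le (hY _ (hvβY j hj)).1)
    · refine R2.conClauses_eval.2 (fun j hj hl1 hle => ?_) ψ hψ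
      have : vβ j = l.getD j 0 := rfl
      rw [this] at hle ⊢
      exact R2.le1_of_le1_of_between hl1.1 hle (hw 0).le
  -- transfer to α
  have hsatα : R2.Sat2 R2.le1 R2.le2 α Φ :=
    (((R2.le2_iff_abs α β).1 hle2).2 Φ hcst).2 hsatβ
  obtain ⟨v', hv', H⟩ := hsatα
  set hm : Ordinal → Ordinal := fun z => (R2.trm l z).val v' (fun _ => 0) with hmdef
  have hval' : ∀ (w : ℕ → Ordinal) (a : Ordinal), (R2.trm l a).val v' w = hm a := by
    intro w a
    rw [hmdef]
    exact R2.trm_val_indep l a v' w (fun _ => 0)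
  have hm_mem : ∀ a ∈ l, hm a = v' (l.idxOf a) := by
    intro a ha
    rw [hmdef]
    exact R2.trm_val_of_mem ha v' (fun _ => 0)
  have hm_not_mem : ∀ a, a ∉ l → hm a = a := by
    intro a ha
    rw [hmdef]
    exact R2.trm_val_of_not_mem ha v' (fun _ => 0)
  have hmX : ∀ x ∈ X, hm x = x := fun x hx => hm_not_mem x (hXnl x hx)
  -- unpack the diagram and eta clauses at w = 0
  have H0 := H (fun _ => 0) (fun _ => hpos)
  rw [hΦ, R2.bigAnd_eval] at H0
  have hDia : ∀ a ∈ A, ∀ b ∈ A,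
      (a ≤ b ↔ hm a ≤ hm b) ∧ (R2.le1 a b ↔ R2.le1 (hm a) (hm b)) ∧
      (R2.le2 a b ↔ R2.le2 (hm a) (hm b)) := by
    intro a ha b hb
    have := R2.diagram_eval.1
      (fun ψ hψ => H0 ψ (List.mem_append.2 (Or.inl (List.mem_append.2 (Or.inl hψ))))) a ha b hb
    rwa [hval' _ a, hval' _ b] at this
  have hEta : ∀ j < k, η < v' j := by
    intro j hj
    have := R2.etaClauses_eval.1
      (fun ψ hψ => H0 ψ (List.mem_append.2 (Or.inl (List.mem_append.2 (Or.inr hψ))))) j hj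
    exact not_le.1 this
  have hmemAY : ∀ y ∈ Y, y ∈ A := fun y hy => (hmemA y).2 (Finset.mem_union_right X hy)
  have hmemAX : ∀ x ∈ X, x ∈ A := fun x hx => (hmemA x).2 (Finset.mem_union_left Y hx)
  have hmY : ∀ y ∈ Y, hm y = v' (l.idxOf y) := fun y hy => hm_mem y ((hmeml y).2 hy)
  have hidxY : ∀ y ∈ Y, l.idxOf y < k := fun y hy =>
    List.idxOf_lt_length_iff.2 ((hmeml y).2 hy)
  refine ⟨Y.image hm, ?_, ?_, ?_, hm, ?_, hmX, ?_, ?_, ?_⟩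
  · -- elements below α
    intro y hy
    obtain ⟨y', hy', rfl⟩ := Finset.mem_image.1 hy
    rw [hmY y' hy']
    exact hv' _
  · -- above η
    intro y hy
    obtain ⟨y', hy', rfl⟩ := Finset.mem_image.1 hy
    rw [hmY y' hy']
    exact hEta _ (hidxY y' hy')
  · -- above X
    intro x hx y hy
    obtain ⟨y', hy', rfl⟩ := Finset.mem_image.1 hy
    have h1 := (hDia y' (hmemAY y' hy') x (hmemAX x hx)).1
    have h2 : ¬ (y' ≤ x) := not_le.2 ((hX x hx).trans_le (hY y' hy').1)
    have := mt h1.2 h2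
    rw [hmX x hx] at this
    exact not_le.1 this
  · -- bijection
    constructor
    · intro z hz
      rcases Finset.mem_union.1 (Finset.mem_coe.1 hz) with h | h
      · rw [hmX z h]
        exact Finset.mem_coe.2 (Finset.mem_union_left _ h)
      · exact Finset.mem_coe.2 (Finset.mem_union_right _ (Finset.mem_image_of_mem hm h))
    constructor
    · intro a ha b hb hab
      have hDa := hDia a ((hmemA a).2 (Finset.mem_coe.1 ha)) b ((hmemA b).2 (Finset.mem_coe.1 hb))
      have hDb := hDia b ((hmemA b).2 (Finset.mem_coe.1 hb)) a ((hmemA a).2 (Finset.mem_coe.1 ha))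
      exact le_antisymm (hDa.1.2 (hab ▸ le_rfl)) (hDb.1.2 (hab ▸ le_rfl))
    · intro z hz
      rcases Finset.mem_union.1 (Finset.mem_coe.1 hz) with h | h
      · exact ⟨z, Finset.mem_coe.2 (Finset.mem_union_left _ h), hmX z h⟩
      · obtain ⟨y', hy', rfl⟩ := Finset.mem_image.1 h
        exact ⟨y', Finset.mem_coe.2 (Finset.mem_union_right _ hy'), rfl⟩
  · -- image of Y
    exact (Finset.coe_image).symm
  · -- isomorphism
    intro a ha b hb
    exact hDia a ((hmemA a).2 (Finset.mem_coe.1 ha)) b ((hmemA b).2 (Finset.mem_coe.1 hb))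
  · -- maintaining ≤₁ connections
    intro y hy hy1
    have hidx : l.idxOf y < l.length := hidxY y hy
    have hget : l.getD (l.idxOf y) 0 = y := by
      rw [List.getD_eq_getElem l 0 hidx]
      exact List.idxOf_get hidx
    have hmyα : hm y < α := by
      rw [hmY y hy]; exact hv' _
    refine ⟨R2.le1_of_forall_lt hmyα hsucc ?_, hmyα⟩
    intro w₀ hge hlt
    have Hw := H (fun _ => w₀) (fun _ => hlt)
    rw [hΦ, R2.bigAnd_eval] at Hw
    have := R2.conClauses_eval.1
      (fun ψ hψ => Hw ψ (List.mem_append.2 (Or.inr hψ))) (l.idxOf y) hidx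
      (by rw [hget]; exact hy1)
    rw [← hmY y hy] at this
    exact this hge
end
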